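/- Let L = L₀ ⊕ L₁ be a complex Leibniz superalgebra with dim L₀ = n and dim L₁ = m ≥ 1, of nilindex n + m + 1 (i.e. L^{n+m} ≠ 0 and L^{n+m+1} = 0). Then m = n if n + m is even and m = n + 1 if n + m is odd, and there exists a basis e₁, …, e_{n+m} of L, with e_i ∈ L₁ for i odd and e_i ∈ L₀ for i even, such that [e_i, e₁] = e_{i+1} for 1 ≤ i ≤ n+m−1, [e_i, e₂] = 2 e_{i+2} for 1 ≤ i ≤ n+m−2, and all other products of basis elements are zero. -/

import Mathlib

/-- A complex Leibniz superalgebra structure on a vector space `V`: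
a bilinear bracket together with an internal ℤ₂-grading `V = L0 ⊕ L1`
such that the bracket respects the grading and the Leibniz superidentity
`[x,[y,z]] = [[x,y],z] − (−1)^{αβ}[[x,z],y]` holds for homogeneous `y, z`. -/
structure LeibnizSuperAlg (V : Type*) [AddCommGroup V] [Module ℂ V] where
  br : V →ₗ[ℂ] V →ₗ[ℂ] V
  L0 : Submodule ℂ V
  L1 : Submodule ℂ V
  compl : IsCompl L0 L1
  grade00 : ∀ x ∈ L0, ∀ y ∈ L0, br x y ∈ L0
  grade01 : ∀ x ∈ L0, ∀ y ∈ L1, br x y ∈ L1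
  grade10 : ∀ x ∈ L1, ∀ y ∈ L0, br x y ∈ L1
  grade11 : ∀ x ∈ L1, ∀ y ∈ L1, br x y ∈ L0
  super_ee : ∀ (x : V), ∀ y ∈ L0, ∀ z ∈ L0,
    br x (br y z) = br (br x y) z - br (br x z) y
  super_eo : ∀ (x : V), ∀ y ∈ L0, ∀ z ∈ L1,
    br x (br y z) = br (br x y) z - br (br x z) y
  super_oe : ∀ (x : V), ∀ y ∈ L1, ∀ z ∈ L0,
    br x (br y z) = br (br x y) z - br (br x z) y
  super_oo : ∀ (x : V), ∀ y ∈ L1, ∀ z ∈ L1,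
    br x (br y z) = br (br x y) z + br (br x z) y

namespace LeibnizSuperAlg

variable {V : Type*} [AddCommGroup V] [Module ℂ V]

/-- The span of all products `[u,v]` with `u ∈ S`, `v ∈ T`. -/
def prodSpan (A : LeibnizSuperAlg V) (S T : Submodule ℂ V) : Submodule ℂ V :=
  Submodule.span ℂ {z : V | ∃ u ∈ S, ∃ v ∈ T, z = A.br u v}

/-- `A.lcs k` is the `(k+1)`-st term `L^{k+1}` of the descending central series:
`L¹ = L`, `L^{k+1} = [L^k, L]`. -/
def lcs (A : LeibnizSuperAlg V) : ℕ → Submodule ℂ V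
  | 0 => ⊤
  | k + 1 => A.prodSpan (lcs A k) ⊤

/-- `A.lcs0 k` is the `(k+1)`-st term `L₀^{k+1}` of the descending central series
of the even part: `L₀¹ = L₀`, `L₀^{k+1} = [L₀^k, L₀]`. -/
def lcs0 (A : LeibnizSuperAlg V) : ℕ → Submodule ℂ V
  | 0 => A.L0
  | k + 1 => A.prodSpan (lcs0 A k) A.L0

/-- Nilpotency: some term of the descending central series vanishes. -/
def IsNilpotent (A : LeibnizSuperAlg V) : Prop := ∃ s, A.lcs s = ⊥

/-- `S` generates `L`: the smallest subspace containing `S` and closed under the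
product is `L` itself. -/
def Generates (A : LeibnizSuperAlg V) (S : Set V) : Prop :=
  ∀ W : Submodule ℂ V, S ⊆ W → (∀ u ∈ W, ∀ v ∈ W, A.br u v ∈ W) → W = ⊤

/-- The operator of right multiplication `R_x : z ↦ [z, x]`. -/
def R (A : LeibnizSuperAlg V) (x : V) : V →ₗ[ℂ] V := A.br.flip x

end LeibnizSuperAlg

-- auxiliary development, to be appended after `end LeibnizSuperAlg` in proof.lean
namespace LeibnizSuperAlg

variable {V : Type*} [AddCommGroup V] [Module ℂ V] (A : LeibnizSuperAlg V)

lemma mem_prodSpan {S T : Submodule ℂ V} {u v : V} (hu : u ∈ S) (hv : v ∈ T) :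
    A.br u v ∈ A.prodSpan S T :=
  Submodule.subset_span ⟨u, hu, v, hv, rfl⟩

lemma prodSpan_mono {S S' T T' : Submodule ℂ V} (hS : S ≤ S') (hT : T ≤ T') :
    A.prodSpan S T ≤ A.prodSpan S' T' :=
  Submodule.span_mono (fun _z hz => by
    obtain ⟨u, hu, v, hv, hz⟩ := hz; exact ⟨u, hS hu, v, hT hv, hz⟩)

lemma lcs_succ (k : ℕ) : A.lcs (k + 1) = A.prodSpan (A.lcs k) ⊤ := rfl

lemma lcs_antitone : ∀ k, A.lcs (k + 1) ≤ A.lcs k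
  | 0 => le_top
  | (k + 1) => A.prodSpan_mono (lcs_antitone k) le_rfl

/-- homogeneous projection onto `L0` -/
noncomputable def p0 : V →ₗ[ℂ] V :=
  A.L0.subtype ∘ₗ (A.L0.linearProjOfIsCompl A.L1 A.compl)

lemma p0_mem (z : V) : A.p0 z ∈ A.L0 := (A.L0.linearProjOfIsCompl A.L1 A.compl z).2

lemma p0_apply_left {z : V} (h : z ∈ A.L0) : A.p0 z = z := by
  simp only [p0, LinearMap.comp_apply, Submodule.subtype_apply]
  exact congrArg Subtype.val (Submodule.projectionOnto_apply_of_mem_left A.compl h)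

lemma p0_apply_right {z : V} (h : z ∈ A.L1) : A.p0 z = 0 := by
  simp only [p0, LinearMap.comp_apply, Submodule.subtype_apply, ZeroMemClass.coe_eq_zero]
  exact Submodule.projectionOnto_apply_of_mem_right A.compl h

lemma sub_p0_mem (z : V) : z - A.p0 z ∈ A.L1 := by
  have hz : z ∈ A.L0 ⊔ A.L1 := by rw [A.compl.sup_eq_top]; trivial
  obtain ⟨a, ha, b, hb, rfl⟩ := Submodule.mem_sup.1 hz
  have : A.p0 (a + b) = a := by
    rw [map_add, A.p0_apply_left ha, A.p0_apply_right hb, add_zero]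
  rw [this]
  simpa using hb

/-- the terms of the descending central series are graded -/
lemma p0_lcs : ∀ k, ∀ u ∈ A.lcs k, A.p0 u ∈ A.lcs k := by
  intro k
  induction k with
  | zero => intro u _; trivial
  | succ k ih =>
    intro u hu
    induction hu using Submodule.span_induction with
    | mem z hz =>
      obtain ⟨p, hp, q, hq, rfl⟩ := hz
      have hp0 : A.p0 p ∈ A.lcs k := ih p hp
      have hp1 : p - A.p0 p ∈ A.lcs k := sub_mem hp (ih p hp)
      have hq1 : q - A.p0 q ∈ (⊤ : Submodule ℂ V) := trivial
      have hsplit : A.br p q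
          = A.br (A.p0 p) (A.p0 q) + A.br (A.p0 p) (q - A.p0 q)
            + A.br (p - A.p0 p) (A.p0 q) + A.br (p - A.p0 p) (q - A.p0 q) := by
        simp only [map_sub, LinearMap.sub_apply]
        abel
      rw [hsplit]
      have e1 : A.p0 (A.br (A.p0 p) (A.p0 q)) = A.br (A.p0 p) (A.p0 q) :=
        A.p0_apply_left (A.grade00 _ (A.p0_mem p) _ (A.p0_mem q))
      have e2 : A.p0 (A.br (A.p0 p) (q - A.p0 q)) = 0 :=
        A.p0_apply_right (A.grade01 _ (A.p0_mem p) _ (A.sub_p0_mem q))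
      have e3 : A.p0 (A.br (p - A.p0 p) (A.p0 q)) = 0 :=
        A.p0_apply_right (A.grade10 _ (A.sub_p0_mem p) _ (A.p0_mem q))
      have e4 : A.p0 (A.br (p - A.p0 p) (q - A.p0 q)) = A.br (p - A.p0 p) (q - A.p0 q) :=
        A.p0_apply_left (A.grade11 _ (A.sub_p0_mem p) _ (A.sub_p0_mem q))
      rw [map_add, map_add, map_add, e1, e2, e3, e4, add_zero, add_zero]
      exact add_mem (A.mem_prodSpan hp0 trivial) (A.mem_prodSpan hp1 trivial)
    | zero => simp only [map_zero]; exact zero_mem (A.lcs (k+1))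
    | add x y hx hy hx' hy' => rw [map_add]; exact add_mem hx' hy'
    | smul c x hx hx' => rw [map_smul]; exact (A.lcs (k+1)).smul_mem c hx'

lemma sub_p0_lcs (k : ℕ) {u : V} (hu : u ∈ A.lcs k) : u - A.p0 u ∈ A.lcs k :=
  sub_mem hu (A.p0_lcs k u hu)

/-- the super Leibniz identity for homogeneous `y, z`, membership form -/
lemma super_cases (x y z : V) (hy : y ∈ A.L0 ∨ y ∈ A.L1) (hz : z ∈ A.L0 ∨ z ∈ A.L1)
    {W : Submodule ℂ V} (h1 : A.br (A.br x y) z ∈ W) (h2 : A.br (A.br x z) y ∈ W) :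
    A.br x (A.br y z) ∈ W := by
  rcases hy with hy | hy <;> rcases hz with hz | hz
  · rw [A.super_ee x y hy z hz]; exact sub_mem h1 h2
  · rw [A.super_eo x y hy z hz]; exact sub_mem h1 h2
  · rw [A.super_oe x y hy z hz]; exact sub_mem h1 h2
  · rw [A.super_oo x y hy z hz]; exact add_mem h1 h2

/-- `[L^{a+1}, L^{b+1}] ⊆ L^{a+b+2}` -/
lemma br_lcs_lcs : ∀ b a : ℕ, ∀ u ∈ A.lcs a, ∀ v ∈ A.lcs b,
    A.br u v ∈ A.lcs (a + b + 1) := by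
  intro b
  induction b with
  | zero => intro a u hu v _; exact A.mem_prodSpan hu trivial
  | succ b ih =>
    intro a u hu v hv
    induction hv using Submodule.span_induction with
    | mem z hz =>
      obtain ⟨p, hp, q, _hq, rfl⟩ := hz
      have hsplit : A.br p q
          = A.br (A.p0 p) (A.p0 q) + A.br (A.p0 p) (q - A.p0 q)
            + A.br (p - A.p0 p) (A.p0 q) + A.br (p - A.p0 p) (q - A.p0 q) := by
        simp only [map_sub, LinearMap.sub_apply]
        abel
      rw [hsplit, map_add, map_add, map_add]
      have key : ∀ p' q' : V, p' ∈ A.lcs b → (p' ∈ A.L0 ∨ p' ∈ A.L1) →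
          (q' ∈ A.L0 ∨ q' ∈ A.L1) → A.br u (A.br p' q') ∈ A.lcs (a + (b+1) + 1) := by
        intro p' q' hp' hyp hzq
        refine A.super_cases u p' q' hyp hzq ?_ ?_
        · have h1 : A.br u p' ∈ A.lcs (a + b + 1) := ih a u hu p' hp'
          have h2 : A.br (A.br u p') q' ∈ A.lcs (a + b + 1 + 1) :=
            A.mem_prodSpan h1 trivial
          have hE : a + (b + 1) + 1 = a + b + 1 + 1 := by omega
          rw [hE]; exact h2
        · have h1 : A.br u q' ∈ A.lcs (a + 1) := A.mem_prodSpan hu trivial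
          have h2 : A.br (A.br u q') p' ∈ A.lcs ((a + 1) + b + 1) :=
            ih (a + 1) _ h1 p' hp'
          have hE : a + (b + 1) + 1 = (a + 1) + b + 1 := by omega
          rw [hE]; exact h2
      refine add_mem (add_mem (add_mem ?_ ?_) ?_) ?_
      · exact key _ _ (A.p0_lcs b p hp) (Or.inl (A.p0_mem p)) (Or.inl (A.p0_mem q))
      · exact key _ _ (A.p0_lcs b p hp) (Or.inl (A.p0_mem p)) (Or.inr (A.sub_p0_mem q))
      · exact key _ _ (A.sub_p0_lcs b hp) (Or.inr (A.sub_p0_mem p)) (Or.inl (A.p0_mem q))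
      · exact key _ _ (A.sub_p0_lcs b hp) (Or.inr (A.sub_p0_mem p)) (Or.inr (A.sub_p0_mem q))
    | zero => simp only [map_zero]; exact zero_mem (A.lcs (a + (b+1) + 1))
    | add x y hx hy hx' hy' => rw [map_add]; exact add_mem hx' hy'
    | smul c x hx hx' => rw [map_smul]; exact Submodule.smul_mem _ c hx'

/-- The chain `e_{k+1} = [e_k, x]`. -/
def Echain (A : LeibnizSuperAlg V) (x : V) : ℕ → V
  | 0 => x
  | k + 1 => A.br (Echain A x k) x

lemma Echain_mem_lcs (x : V) : ∀ k, A.Echain x k ∈ A.lcs k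
  | 0 => trivial
  | (k + 1) => A.mem_prodSpan (Echain_mem_lcs x k) trivial

lemma Echain_le (x : V) (hx : (⊤ : Submodule ℂ V) ≤ (ℂ ∙ x) ⊔ A.lcs 1) :
    ∀ k, A.lcs k ≤ (ℂ ∙ (A.Echain x k)) ⊔ A.lcs (k + 1) := by
  intro k
  induction k with
  | zero => exact hx
  | succ k ih =>
    intro z hz
    induction hz using Submodule.span_induction with
    | mem z hz =>
      obtain ⟨u, hu, v, _hv, rfl⟩ := hz
      obtain ⟨y, hy, u', hu', rfl⟩ := Submodule.mem_sup.1 (ih hu)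
      obtain ⟨c, rfl⟩ := Submodule.mem_span_singleton.1 hy
      obtain ⟨w, hw, v', hv', rfl⟩ := Submodule.mem_sup.1 (hx (Submodule.mem_top :
        (v : V) ∈ ⊤))
      obtain ⟨d, rfl⟩ := Submodule.mem_span_singleton.1 hw
      have hsplit : A.br (c • A.Echain x k + u') (d • x + v')
          = (c * d) • A.br (A.Echain x k) x + c • A.br (A.Echain x k) v'
            + d • A.br u' x + A.br u' v' := by
        simp only [map_add, map_smul, LinearMap.add_apply, LinearMap.smul_apply]
        module
      rw [hsplit]
      refine add_mem (add_mem (add_mem ?_ ?_) ?_) ?_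
      · exact Submodule.mem_sup_left (Submodule.smul_mem _ _
          (Submodule.mem_span_singleton_self _))
      · refine Submodule.mem_sup_right (Submodule.smul_mem _ _ ?_)
        exact A.br_lcs_lcs 1 k (A.Echain x k) (A.Echain_mem_lcs x k) v' hv'
      · exact Submodule.mem_sup_right (Submodule.smul_mem _ _
          (A.mem_prodSpan hu' trivial))
      · exact Submodule.mem_sup_right (A.mem_prodSpan hu' trivial)
    | zero => exact Submodule.zero_mem _
    | add a b ha hb ha' hb' => exact add_mem ha' hb'
    | smul c a ha ha' => exact Submodule.smul_mem _ c ha'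

end LeibnizSuperAlg

namespace LeibnizSuperAlg

variable {V : Type*} [AddCommGroup V] [Module ℂ V] (A : LeibnizSuperAlg V)

lemma Echain_parity {x : V} (hx1 : x ∈ A.L1) :
    ∀ k, (Even k → A.Echain x k ∈ A.L1) ∧ (¬ Even k → A.Echain x k ∈ A.L0) := by
  intro k
  induction k with
  | zero => exact ⟨fun _ => hx1, fun h => absurd (Even.zero (α := ℕ)) h⟩
  | succ k ih =>
    constructor
    · intro hev
      have hk : ¬ Even k := by rw [Nat.even_add_one] at hev; exact hev
      exact A.grade01 _ (ih.2 hk) _ hx1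
    · intro hodd
      have hk : Even k := by rw [Nat.even_add_one, not_not] at hodd; exact hodd
      exact A.grade11 _ (ih.1 hk) _ hx1

lemma brE1 {x : V} (hx1 : x ∈ A.L1) (z : V) :
    A.br z (A.Echain x 1) = (2 : ℂ) • A.br (A.br z x) x := by
  show A.br z (A.br x x) = _
  rw [A.super_oo z x hx1 x hx1]
  exact (two_smul ℂ _).symm

lemma brE_ge2 {x : V} (hx1 : x ∈ A.L1) : ∀ k, ∀ z, A.br z (A.Echain x (k + 2)) = 0 := by
  intro k
  induction k with
  | zero =>
    intro z
    have hE1 : A.Echain x 1 ∈ A.L0 := (A.Echain_parity hx1 1).2 (by simp)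
    show A.br z (A.br (A.Echain x 1) x) = 0
    rw [A.super_eo z _ hE1 x hx1, A.brE1 hx1 z, A.brE1 hx1 (A.br z x), map_smul,
      LinearMap.smul_apply, sub_self]
  | succ k ih =>
    intro z
    show A.br z (A.br (A.Echain x (k + 2)) x) = 0
    rcases Nat.even_or_odd (k + 2) with hev | hodd
    · have hE : A.Echain x (k + 2) ∈ A.L1 := (A.Echain_parity hx1 (k + 2)).1 hev
      rw [A.super_oo z _ hE x hx1, ih z, ih (A.br z x)]
      simp
    · have hE : A.Echain x (k + 2) ∈ A.L0 :=
        (A.Echain_parity hx1 (k + 2)).2 (Nat.not_even_iff_odd.2 hodd)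
      rw [A.super_eo z _ hE x hx1, ih z, ih (A.br z x)]
      simp

end LeibnizSuperAlg


/-- A complex Leibniz superalgebra with `dim L₀ = n`, `dim L₁ = m ≥ 1` and
nilindex `n + m + 1` (`L^{n+m} ≠ 0`, `L^{n+m+1} = 0`) satisfies `m = n` if `n+m` is even
and `m = n+1` if `n+m` is odd, and has a basis `e₁,…,e_{n+m}` (0-indexed here, with
`e_i ∈ L₁` for even 0-index, `e_i ∈ L₀` for odd 0-index) such that `[e_i,e₁] = e_{i+1}`,
`[e_i,e₂] = 2e_{i+2}` and all other products of basis vectors vanish. -/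
theorem statement8 {V : Type*} [AddCommGroup V] [Module ℂ V] [FiniteDimensional ℂ V]
    (A : LeibnizSuperAlg V) (n m : ℕ)
    (hn : Module.finrank ℂ A.L0 = n) (hm : Module.finrank ℂ A.L1 = m) (hm1 : 1 ≤ m)
    (h1 : A.lcs (n + m - 1) ≠ ⊥) (h2 : A.lcs (n + m) = ⊥) :
    ((Even (n + m) → m = n) ∧ (¬ Even (n + m) → m = n + 1)) ∧
    ∃ e : Module.Basis (Fin (n + m)) ℂ V,
      (∀ i : Fin (n + m), (Even i.val → e i ∈ A.L1) ∧ (¬ Even i.val → e i ∈ A.L0)) ∧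
      (∀ i j : Fin (n + m), A.br (e i) (e j) =
        if h : j.val = 0 ∧ i.val + 1 < n + m then e ⟨i.val + 1, h.2⟩
        else if h' : j.val = 1 ∧ i.val + 2 < n + m then (2 : ℂ) • e ⟨i.val + 2, h'.2⟩
        else 0) := by
  classical
  set N := n + m with hN
  have hNV : Module.finrank ℂ V = N := by
    rw [← Submodule.finrank_add_eq_of_isCompl A.compl, hn, hm]
  have hN1 : 1 ≤ N := le_trans hm1 (Nat.le_add_left m n)
  -- stabilization of the central series
  have hstab : ∀ k, A.lcs k = A.lcs (k + 1) → ∀ j, A.lcs (k + j) = A.lcs k := by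
    intro k hk j
    induction j with
    | zero => rfl
    | succ j ih =>
      show A.lcs ((k + j) + 1) = A.lcs k
      rw [A.lcs_succ (k + j), ih, ← A.lcs_succ k]
      exact hk.symm
  -- strict decrease
  have hstrict : ∀ k, k + 1 ≤ N → A.lcs (k + 1) < A.lcs k := by
    intro k hk
    refine lt_of_le_of_ne (A.lcs_antitone k) ?_
    intro heq
    have hkk : A.lcs k = A.lcs (k + 1) := heq.symm
    have e1 : A.lcs (N - 1) = A.lcs k := by
      rw [show N - 1 = k + (N - 1 - k) by omega]; exact hstab k hkk _
    have e2 : A.lcs N = A.lcs k := by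
      rw [show N = k + (N - k) by omega]; exact hstab k hkk _
    exact h1 (e1.trans (e2.symm.trans h2))
  -- dimension bounds from below
  have hrank_ge : ∀ j, j + 1 ≤ N → j + 1 ≤ Module.finrank ℂ (A.lcs (N - 1 - j)) := by
    intro j
    induction j with
    | zero =>
      intro _
      by_contra h
      push_neg at h
      rw [Nat.sub_zero] at h
      have h0 : Module.finrank ℂ (A.lcs (N - 1)) = 0 := by omega
      exact h1 (Submodule.finrank_eq_zero.1 h0)
    | succ j ih =>
      intro hj
      have hlt : A.lcs (N - 1 - j) < A.lcs (N - 1 - (j + 1)) := by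
        have hidx : (N - 1 - (j + 1)) + 1 = N - 1 - j := by omega
        rw [← hidx]
        exact hstrict _ (by omega)
      have hr1 := Submodule.finrank_lt_finrank_of_lt hlt
      have hr2 := ih (by omega)
      omega
  have hlcs0 : Module.finrank ℂ (A.lcs 0) = N := by
    rw [show A.lcs 0 = ⊤ from rfl, finrank_top]; exact hNV
  have hlcs1 : Module.finrank ℂ (A.lcs 1) = N - 1 := by
    have hlt : Module.finrank ℂ (A.lcs 1) < N := by
      have h' := Submodule.finrank_lt_finrank_of_lt (hstrict 0 hN1)
      rw [hlcs0] at h'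
      exact h'
    rcases Nat.lt_or_ge N 2 with hN2 | hN2
    · omega
    · have hge := hrank_ge (N - 2) (by omega)
      have he : N - 1 - (N - 2) = 1 := by omega
      rw [he] at hge
      omega
  -- any element outside L² generates together with L²
  have hgen : ∀ x : V, x ∉ A.lcs 1 → (⊤ : Submodule ℂ V) ≤ (ℂ ∙ x) ⊔ A.lcs 1 := by
    intro x hx
    have hlt : A.lcs 1 < (ℂ ∙ x) ⊔ A.lcs 1 := by
      refine lt_of_le_of_ne le_sup_right ?_
      intro heq
      apply hx
      rw [heq]
      exact Submodule.mem_sup_left (Submodule.mem_span_singleton_self x)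
    have h3 := Submodule.finrank_lt_finrank_of_lt hlt
    have h4 : Module.finrank ℂ ((ℂ ∙ x) ⊔ A.lcs 1 : Submodule ℂ V) = Module.finrank ℂ V := by
      have h5 : Module.finrank ℂ ((ℂ ∙ x) ⊔ A.lcs 1 : Submodule ℂ V) ≤
          Module.finrank ℂ V := Submodule.finrank_le _
      omega
    exact (Submodule.eq_top_of_finrank_eq h4).ge
  -- the chain spans
  have hspan : ∀ x : V, x ∉ A.lcs 1 →
      (⊤ : Submodule ℂ V) ≤ Submodule.span ℂ
        (Set.range fun i : Fin N => A.Echain x i.val) := by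
    intro x hx
    have hle := A.Echain_le x (hgen x hx)
    have key : ∀ j, j ≤ N → A.lcs (N - j) ≤
        Submodule.span ℂ (Set.range fun i : Fin N => A.Echain x i.val) ⊔ A.lcs N := by
      intro j
      induction j with
      | zero => intro _; exact le_sup_right
      | succ j ih =>
        intro hj
        have h5 := hle (N - (j + 1))
        have hidx : N - (j + 1) + 1 = N - j := by omega
        rw [hidx] at h5
        refine h5.trans (sup_le ?_ (ih (by omega)))
        have hEmem : A.Echain x (N - (j + 1)) ∈
            Submodule.span ℂ (Set.range fun i : Fin N => A.Echain x i.val) :=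
          Submodule.subset_span ⟨⟨N - (j + 1), by omega⟩, rfl⟩
        exact (Submodule.span_singleton_le_iff_mem _ _).2 (Submodule.mem_sup_left hEmem)
    have h6 := key N le_rfl
    rw [Nat.sub_self, h2, sup_bot_eq] at h6
    exact h6
  by_cases hL1le : A.L1 ≤ A.lcs 1
  · -- impossible: the generator would be even
    exfalso
    have hne : A.lcs 1 ≠ ⊤ := by
      have hlt := hstrict 0 hN1
      rw [show A.lcs 0 = ⊤ from rfl] at hlt
      exact hlt.ne
    obtain ⟨x, hx⟩ : ∃ x : V, x ∉ A.lcs 1 := by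
      by_contra hall
      push_neg at hall
      exact hne (eq_top_iff.2 fun z _ => hall z)
    have hx0 : A.p0 x ∉ A.lcs 1 := by
      intro hmem
      apply hx
      have hxeq : x = A.p0 x + (x - A.p0 x) := by abel
      rw [hxeq]
      exact add_mem hmem (hL1le (A.sub_p0_mem x))
    have hE0 : ∀ k, A.Echain (A.p0 x) k ∈ A.L0 := by
      intro k
      induction k with
      | zero => exact A.p0_mem x
      | succ k ih => exact A.grade00 _ ih _ (A.p0_mem x)
    have htopL0 : (⊤ : Submodule ℂ V) ≤ A.L0 := by
      refine (hspan _ hx0).trans (Submodule.span_le.2 ?_)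
      rintro z ⟨i, rfl⟩
      exact hE0 _
    have hL1bot : A.L1 = ⊥ := by
      have hinf : A.L1 ≤ A.L0 ⊓ A.L1 := le_inf (le_trans le_top htopL0) le_rfl
      rw [A.compl.disjoint.eq_bot] at hinf
      exact le_bot_iff.1 hinf
    rw [hL1bot, finrank_bot] at hm
    omega
  · obtain ⟨x, hx1, hxn⟩ := SetLike.not_le_iff_exists.1 hL1le
    have hsp := hspan x hxn
    have hcard : Fintype.card (Fin N) = Module.finrank ℂ V := by
      rw [Fintype.card_fin, hNV]
    let e : Module.Basis (Fin N) ℂ V :=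
      basisOfTopLeSpanOfCardEqFinrank (fun i : Fin N => A.Echain x i.val) hsp hcard
    have he : ⇑e = fun i : Fin N => A.Echain x i.val :=
      coe_basisOfTopLeSpanOfCardEqFinrank _ hsp hcard
    have hpar := A.Echain_parity hx1
    have hEzero : ∀ k, N ≤ k → A.Echain x k = 0 := by
      intro k
      induction k with
      | zero => intro hk; exact absurd hk (by omega)
      | succ k ih =>
        intro hk
        rcases Nat.lt_or_ge k N with hlt | hge
        · have hkN : k + 1 = N := by omega
          have hmem := A.Echain_mem_lcs x (k + 1)
          rw [show A.lcs (k + 1) = ⊥ by rw [hkN]; exact h2] at hmem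
          exact (Submodule.mem_bot ℂ).1 hmem
        · show A.br (A.Echain x k) x = 0
          rw [ih hge]
          simp
    -- counting
    have hm_ge : (N + 1) / 2 ≤ m := by
      have hginj : Function.Injective
          (fun j : Fin ((N + 1) / 2) => (⟨2 * j.val, by omega⟩ : Fin N)) := by
        intro a b hab
        have hval := congrArg Fin.val hab
        simp only [Fin.val_fin_lt] at hval
        exact Fin.ext (by omega)
      have hli : LinearIndependent ℂ
          ((fun i : Fin N => A.Echain x i.val) ∘
            fun j : Fin ((N + 1) / 2) => (⟨2 * j.val, by omega⟩ : Fin N)) :=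
        (he ▸ e.linearIndependent).comp _ hginj
      have hsub : Submodule.span ℂ (Set.range ((fun i : Fin N => A.Echain x i.val) ∘
            fun j : Fin ((N + 1) / 2) => (⟨2 * j.val, by omega⟩ : Fin N))) ≤ A.L1 := by
        refine Submodule.span_le.2 ?_
        rintro z ⟨j, rfl⟩
        exact (hpar _).1 ⟨j.val, two_mul j.val⟩
      have h7 := finrank_span_eq_card hli
      have h8 := Submodule.finrank_mono hsub
      rw [h7, Fintype.card_fin, hm] at h8
      exact h8
    have hn_ge : N / 2 ≤ n := by
      have hginj : Function.Injective
          (fun j : Fin (N / 2) => (⟨2 * j.val + 1, by omega⟩ : Fin N)) := by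
        intro a b hab
        have hval := congrArg Fin.val hab
        simp only [Fin.val_fin_lt] at hval
        exact Fin.ext (by omega)
      have hli : LinearIndependent ℂ
          ((fun i : Fin N => A.Echain x i.val) ∘
            fun j : Fin (N / 2) => (⟨2 * j.val + 1, by omega⟩ : Fin N)) :=
        (he ▸ e.linearIndependent).comp _ hginj
      have hsub : Submodule.span ℂ (Set.range ((fun i : Fin N => A.Echain x i.val) ∘
            fun j : Fin (N / 2) => (⟨2 * j.val + 1, by omega⟩ : Fin N))) ≤ A.L0 := by
        refine Submodule.span_le.2 ?_
        rintro z ⟨j, rfl⟩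
        refine (hpar _).2 ?_
        rintro ⟨r, hr⟩
        have hr' : 2 * j.val + 1 = r + r := hr
        omega
      have h7 := finrank_span_eq_card hli
      have h8 := Submodule.finrank_mono hsub
      rw [h7, Fintype.card_fin, hn] at h8
      exact h8
    refine ⟨⟨fun hev => ?_, fun hodd => ?_⟩, ?_⟩
    · rw [Nat.even_iff] at hev; omega
    · rw [Nat.even_iff] at hodd; omega
    refine ⟨e, fun i => ?_, fun i j => ?_⟩
    · rw [he]
      exact ⟨fun hev => (hpar i.val).1 hev, fun hodd => (hpar i.val).2 hodd⟩
    · rw [he]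
      obtain ⟨iv, hiN⟩ := i
      obtain ⟨jv, hjN⟩ := j
      rcases jv with _ | _ | jv
      · -- j = 0 : [e_i, e_1] = e_{i+1}
        show A.Echain x (iv + 1) = _
        by_cases hlt : iv + 1 < N
        · rw [dif_pos ⟨rfl, hlt⟩]
        · rw [dif_neg (fun h => hlt h.2), dif_neg (fun h => Nat.zero_ne_one h.1)]
          exact hEzero (iv + 1) (by omega)
      · -- j = 1 : [e_i, e_2] = 2 e_{i+2}
        show A.br (A.Echain x iv) (A.Echain x 1) = _
        rw [A.brE1 hx1]
        show (2 : ℂ) • A.Echain x (iv + 2) = _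
        by_cases hlt : iv + 2 < N
        · rw [dif_neg (fun h => Nat.one_ne_zero h.1), dif_pos ⟨rfl, hlt⟩]
        · rw [dif_neg (fun h => Nat.one_ne_zero h.1), dif_neg (fun h => hlt h.2)]
          rw [hEzero (iv + 2) (by omega), smul_zero]
      · -- j ≥ 2 : everything vanishes
        show A.br (A.Echain x iv) (A.Echain x (jv + 2)) = _
        rw [A.brE_ge2 hx1 jv]
        rw [dif_neg (fun h => Nat.succ_ne_zero _ h.1),
          dif_neg (fun h => Nat.succ_ne_zero _ (Nat.succ_injective h.1))]
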